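/- arXiv:2006.11650 — 3 statements merged into one kernel-verified Lean document; each statement's English description precedes it below -/
import Mathlib

section
/- Let F be a class of functions from ℝ^r to ℝ, each L(F)-Lipschitz with respect to the Euclidean norm, and H a class of functions from ℝ^d to ℝ^r. Fix a dataset X consisting of n points x_{ji} ∈ ℝ^d for each of t tasks. For the empirical ℓ2 pseudometrics d_{2,X}(f(h), f'(h'))² = (1/nt)∑_{j,i}(f_j(h(x_{ji})) − f'_j(h'(x_{ji})))² on F^{⊗t}(H), d_{2,X}(h,h')² = (1/nt)∑_{k=1}^r∑_{j,i}(h_k(x_{ji}) − h'_k(x_{ji}))² on H, and d_{2,Z}(f,f')² = (1/n)∑_{i=1}^n(f(z_i) − f'(z_i))² on F for an n-point set Z ⊆ ℝ^r, let N_{2,·}(ε; d, ·) denote the ε-covering number in the indicated pseudometric. Then for all ε1, ε2 > 0: log N_{2,X}( L(F)·ε1 + ε2 ; d_{2,X}, F^{⊗t}(H) ) ≤ log N_{2,X}( ε1 ; d_{2,X}, H ) + t · max_{Z∈𝒵} log N_{2,Z}( ε2 ; d_{2,Z}, F ), where 𝒵 = {(h(x_{j1}),…,h(x_{jn})) : h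 ∈ H, j ∈ [t]}. -/
/-! Statement 1: covering-number chain rule for the composed class
`F^{⊗t}(H)`.  For covering at scale `L(F)·ε₁ + ε₂` in the empirical ℓ₂
pseudometric on the composed class,
`log N(L(F)·ε₁ + ε₂; F^{⊗t}(H)) ≤ log N(ε₁; H) + t · max_{Z∈𝒵} log N(ε₂; F)`,
stated here in the equivalent multiplicative form
`N(L(F)·ε₁ + ε₂; F^{⊗t}(H)) ≤ N(ε₁; H) · (max_{Z∈𝒵} N(ε₂; F))^t`
(valid also when covering numbers are infinite). -/

open Set

noncomputable section

/-- Euclidean norm of a vector given as a function. -/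
def eNorm {n : ℕ} (v : Fin n → ℝ) : ℝ := Real.sqrt (∑ i, v i ^ 2)

/-- `C` is an internal `ε`-cover of `A` for the pseudometric `dist`. -/
def IsCover {S : Type*} (dist : S → S → ℝ) (A C : Set S) (ε : ℝ) : Prop :=
  C ⊆ A ∧ ∀ a ∈ A, ∃ c ∈ C, dist a c ≤ ε

/-- Minimal cardinality of an internal `ε`-cover (`⊤` if no finite cover exists). -/
def covNum {S : Type*} (dist : S → S → ℝ) (A : Set S) (ε : ℝ) : ℕ∞ :=
  ⨅ (C : Finset S) (_ : IsCover dist A (C : Set S) ε), (C.card : ℕ∞)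

lemma covNum_le_card {S : Type*} (dist : S → S → ℝ) (A : Set S) (ε : ℝ)
    (C : Finset S) (h : IsCover dist A (C : Set S) ε) :
    covNum dist A ε ≤ C.card :=
  iInf₂_le C h

lemma one_le_covNum {S : Type*} (dist : S → S → ℝ) {A : Set S} (ε : ℝ)
    (hA : A.Nonempty) : 1 ≤ covNum dist A ε := by
  refine le_iInf₂ fun C hC => ?_
  obtain ⟨a, ha⟩ := hA
  obtain ⟨c, hc, -⟩ := hC.2 a ha
  have : 0 < C.card := Finset.card_pos.2 ⟨c, hc⟩
  exact_mod_cast this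

lemma exists_cover_le {S : Type*} (dist : S → S → ℝ) (A : Set S) (ε : ℝ)
    (h : covNum dist A ε ≠ ⊤) :
    ∃ C : Finset S, IsCover dist A (C : Set S) ε ∧
      (C.card : ℕ∞) ≤ covNum dist A ε := by
  have h1 : covNum dist A ε < covNum dist A ε + 1 :=
    (ENat.lt_add_one_iff h).2 le_rfl
  conv at h1 => lhs; rw [covNum]
  rw [iInf_lt_iff] at h1
  obtain ⟨C, hC⟩ := h1
  rw [iInf_lt_iff] at hC
  obtain ⟨hC1, hC2⟩ := hC
  exact ⟨C, hC1, (ENat.lt_add_one_iff h).1 hC2⟩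

lemma sqrt_sum_sq_add_le {ι : Type*} [Fintype ι] (f g : ι → ℝ) :
    Real.sqrt (∑ i, (f i + g i) ^ 2)
      ≤ Real.sqrt (∑ i, f i ^ 2) + Real.sqrt (∑ i, g i ^ 2) := by
  have := norm_add_le ((WithLp.equiv 2 (ι → ℝ)).symm f) ((WithLp.equiv 2 (ι → ℝ)).symm g)
  simpa [EuclideanSpace.norm_eq, sq_abs, ← WithLp.toLp_add] using this

lemma analytic_bound {r n t : ℕ} (hn : 0 < n) (ht : 0 < t)
    (LF ε₁ ε₂ : ℝ) (hLF : 0 ≤ LF) (hε₁ : 0 ≤ ε₁) (hε₂ : 0 ≤ ε₂)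
    (f g : Fin t → (Fin r → ℝ) → ℝ) (u v : Fin t → Fin n → (Fin r → ℝ))
    (hLip : ∀ j, ∀ z z' : Fin r → ℝ, |f j z - f j z'| ≤ LF * eNorm (z - z'))
    (h1 : Real.sqrt ((∑ k : Fin r, ∑ j : Fin t, ∑ i : Fin n,
        (u j i k - v j i k) ^ 2) / (n * t)) ≤ ε₁)
    (h2 : ∀ j, Real.sqrt ((∑ i : Fin n, (f j (v j i) - g j (v j i)) ^ 2) / n) ≤ ε₂) :
    Real.sqrt ((∑ j : Fin t, ∑ i : Fin n,
      (f j (u j i) - g j (v j i)) ^ 2) / (n * t)) ≤ LF * ε₁ + ε₂ := by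
  have hnt : (0:ℝ) < (n : ℝ) * t := by positivity
  set A : Fin t → Fin n → ℝ := fun j i => f j (u j i) - f j (v j i) with hA
  set B : Fin t → Fin n → ℝ := fun j i => f j (v j i) - g j (v j i) with hB
  have hsplit : ∀ j i, f j (u j i) - g j (v j i) = A j i + B j i := by
    intro j i; simp only [hA, hB]; ring
  -- pointwise Lipschitz bound
  have hpt : ∀ j i, A j i ^ 2 ≤ LF ^ 2 * ∑ k, (u j i k - v j i k) ^ 2 := by
    intro j i
    have h := hLip j (u j i) (v j i)
    have h' : A j i ^ 2 ≤ (LF * eNorm (u j i - v j i)) ^ 2 := by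
      rw [← sq_abs]
      exact pow_le_pow_left₀ (abs_nonneg _) h 2
    have he : eNorm (u j i - v j i) ^ 2 = ∑ k, (u j i k - v j i k) ^ 2 := by
      rw [eNorm, Real.sq_sqrt (by positivity)]
      simp [Pi.sub_apply]
    calc A j i ^ 2 ≤ (LF * eNorm (u j i - v j i)) ^ 2 := h'
      _ = LF ^ 2 * eNorm (u j i - v j i) ^ 2 := by ring
      _ = LF ^ 2 * ∑ k, (u j i k - v j i k) ^ 2 := by rw [he]
  have hAsum : (∑ j, ∑ i, A j i ^ 2)
      ≤ LF ^ 2 * ∑ k : Fin r, ∑ j : Fin t, ∑ i : Fin n, (u j i k - v j i k) ^ 2 := by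
    have hswap : (∑ k : Fin r, ∑ j : Fin t, ∑ i : Fin n, (u j i k - v j i k) ^ 2)
        = ∑ j : Fin t, ∑ i : Fin n, ∑ k : Fin r, (u j i k - v j i k) ^ 2 := by
      rw [Finset.sum_comm]
      exact Finset.sum_congr rfl fun j _ => Finset.sum_comm ..
    rw [hswap, Finset.mul_sum]
    refine Finset.sum_le_sum fun j _ => ?_
    rw [Finset.mul_sum]
    exact Finset.sum_le_sum fun i _ => hpt j i
  have hBsum : (∑ j, ∑ i, B j i ^ 2) ≤ (t : ℝ) * ((n : ℝ) * ε₂ ^ 2) := by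
    have hb : ∀ j, (∑ i, B j i ^ 2) ≤ (n : ℝ) * ε₂ ^ 2 := by
      intro j
      have := (Real.sqrt_le_left hε₂).1 (h2 j)
      · rwa [div_le_iff₀ (by positivity), mul_comm] at this
    calc (∑ j, ∑ i, B j i ^ 2) ≤ ∑ _j : Fin t, (n : ℝ) * ε₂ ^ 2 :=
          Finset.sum_le_sum fun j _ => hb j
      _ = (t : ℝ) * ((n : ℝ) * ε₂ ^ 2) := by simp [mul_comm]
  have hmink : Real.sqrt (∑ j, ∑ i, (A j i + B j i) ^ 2)
      ≤ Real.sqrt (∑ j, ∑ i, A j i ^ 2) + Real.sqrt (∑ j, ∑ i, B j i ^ 2) := by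
    have := sqrt_sum_sq_add_le (ι := Fin t × Fin n)
      (fun p => A p.1 p.2) (fun p => B p.1 p.2)
    simpa [Fintype.sum_prod_type] using this
  have hAfin : Real.sqrt ((∑ j, ∑ i, A j i ^ 2) / ((n : ℝ) * t)) ≤ LF * ε₁ := by
    calc Real.sqrt ((∑ j, ∑ i, A j i ^ 2) / ((n : ℝ) * t))
        ≤ Real.sqrt ((LF ^ 2 * ∑ k : Fin r, ∑ j : Fin t, ∑ i : Fin n,
            (u j i k - v j i k) ^ 2) / ((n : ℝ) * t)) := by
          apply Real.sqrt_le_sqrt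
          exact div_le_div_of_nonneg_right hAsum hnt.le
      _ = LF * Real.sqrt ((∑ k : Fin r, ∑ j : Fin t, ∑ i : Fin n,
            (u j i k - v j i k) ^ 2) / ((n : ℝ) * t)) := by
          rw [mul_div_assoc, Real.sqrt_mul (sq_nonneg LF), Real.sqrt_sq hLF]
      _ ≤ LF * ε₁ := by
          exact mul_le_mul_of_nonneg_left h1 hLF
  have hBfin : Real.sqrt ((∑ j, ∑ i, B j i ^ 2) / ((n : ℝ) * t)) ≤ ε₂ := by
    have : (∑ j, ∑ i, B j i ^ 2) / ((n : ℝ) * t) ≤ ε₂ ^ 2 := by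
      rw [div_le_iff₀ hnt]
      calc (∑ j, ∑ i, B j i ^ 2) ≤ (t : ℝ) * ((n : ℝ) * ε₂ ^ 2) := hBsum
        _ = ε₂ ^ 2 * ((n : ℝ) * t) := by ring
    calc Real.sqrt ((∑ j, ∑ i, B j i ^ 2) / ((n : ℝ) * t))
        ≤ Real.sqrt (ε₂ ^ 2) := Real.sqrt_le_sqrt this
      _ = ε₂ := Real.sqrt_sq hε₂
  have hS : (0:ℝ) ≤ ∑ j, ∑ i, (A j i + B j i) ^ 2 := by positivity
  have hSA : (0:ℝ) ≤ ∑ j, ∑ i, A j i ^ 2 := by positivity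
  have hSB : (0:ℝ) ≤ ∑ j, ∑ i, B j i ^ 2 := by positivity
  calc Real.sqrt ((∑ j : Fin t, ∑ i : Fin n,
        (f j (u j i) - g j (v j i)) ^ 2) / ((n : ℝ) * t))
      = Real.sqrt ((∑ j, ∑ i, (A j i + B j i) ^ 2) / ((n : ℝ) * t)) := by
        congr 2; exact Finset.sum_congr rfl fun j _ =>
          Finset.sum_congr rfl fun i _ => by rw [hsplit]
    _ = Real.sqrt (∑ j, ∑ i, (A j i + B j i) ^ 2) / Real.sqrt ((n : ℝ) * t) := by
        rw [Real.sqrt_div hS]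
    _ ≤ (Real.sqrt (∑ j, ∑ i, A j i ^ 2) + Real.sqrt (∑ j, ∑ i, B j i ^ 2))
          / Real.sqrt ((n : ℝ) * t) := by
        apply div_le_div_of_nonneg_right hmink
        exact Real.sqrt_nonneg _
    _ = Real.sqrt ((∑ j, ∑ i, A j i ^ 2) / ((n : ℝ) * t))
          + Real.sqrt ((∑ j, ∑ i, B j i ^ 2) / ((n : ℝ) * t)) := by
        rw [add_div, Real.sqrt_div hSA, Real.sqrt_div hSB]
    _ ≤ LF * ε₁ + ε₂ := add_le_add hAfin hBfin

theorem covering_number_chain_rule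
    {d r n t : ℕ} (hn : 0 < n) (ht : 0 < t)
    (F : Set ((Fin r → ℝ) → ℝ)) (H : Set ((Fin d → ℝ) → (Fin r → ℝ)))
    (LF : ℝ) (hLF : 0 ≤ LF)
    (hLip : ∀ f ∈ F, ∀ z z' : Fin r → ℝ, |f z - f z'| ≤ LF * eNorm (z - z'))
    (x : Fin t → Fin n → (Fin d → ℝ))
    (ε₁ ε₂ : ℝ) (hε₁ : 0 < ε₁) (hε₂ : 0 < ε₂) :
    covNum
      -- empirical ℓ₂ pseudometric on the composed class, via parameter pairs
      (fun p q : (Fin t → (Fin r → ℝ) → ℝ) × ((Fin d → ℝ) → (Fin r → ℝ)) =>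
        Real.sqrt ((∑ j : Fin t, ∑ i : Fin n,
          (p.1 j (p.2 (x j i)) - q.1 j (q.2 (x j i))) ^ 2) / (n * t)))
      {p | (∀ j, p.1 j ∈ F) ∧ p.2 ∈ H}
      (LF * ε₁ + ε₂)
    ≤ covNum
        -- empirical ℓ₂ pseudometric on H
        (fun h h' : (Fin d → ℝ) → (Fin r → ℝ) =>
          Real.sqrt ((∑ k : Fin r, ∑ j : Fin t, ∑ i : Fin n,
            (h (x j i) k - h' (x j i) k) ^ 2) / (n * t)))
        H ε₁
      * (⨆ h : H, ⨆ j : Fin t,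
          covNum
            -- empirical ℓ₂ pseudometric on F over the feature-mapped task data
            (fun f f' : (Fin r → ℝ) → ℝ =>
              Real.sqrt ((∑ i : Fin n, (f (h.1 (x j i)) - f' (h.1 (x j i))) ^ 2) / n))
            F ε₂) ^ t := by
  classical
  set distP := (fun p q : (Fin t → (Fin r → ℝ) → ℝ) × ((Fin d → ℝ) → (Fin r → ℝ)) =>
        Real.sqrt ((∑ j : Fin t, ∑ i : Fin n,
          (p.1 j (p.2 (x j i)) - q.1 j (q.2 (x j i))) ^ 2) / (n * t))) with hdistP
  set distH := (fun h h' : (Fin d → ℝ) → (Fin r → ℝ) =>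
          Real.sqrt ((∑ k : Fin r, ∑ j : Fin t, ∑ i : Fin n,
            (h (x j i) k - h' (x j i) k) ^ 2) / (n * t))) with hdistH
  set distF := (fun (h : (Fin d → ℝ) → (Fin r → ℝ)) (j : Fin t)
      (f f' : (Fin r → ℝ) → ℝ) =>
        Real.sqrt ((∑ i : Fin n, (f (h (x j i)) - f' (h (x j i))) ^ 2) / n)) with hdistF
  set AP : Set ((Fin t → (Fin r → ℝ) → ℝ) × ((Fin d → ℝ) → (Fin r → ℝ))) :=
    {p | (∀ j, p.1 j ∈ F) ∧ p.2 ∈ H} with hAP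
  set M : ℕ∞ := ⨆ h : H, ⨆ j : Fin t, covNum (distF h.1 j) F ε₂ with hM
  -- trivial case: empty composed class
  rcases AP.eq_empty_or_nonempty with hAPe | hAPne
  · rw [hAPe]
    have : covNum distP (∅ : Set _) (LF * ε₁ + ε₂) ≤ (∅ : Finset _).card :=
      covNum_le_card _ _ _ _ ⟨by simp, by simp⟩
    simpa using (le_trans this (by simp))
  obtain ⟨p₀, hp₀⟩ := hAPne
  have hHne : H.Nonempty := ⟨p₀.2, hp₀.2⟩
  have hFne : F.Nonempty := ⟨p₀.1 ⟨0, ht⟩, hp₀.1 ⟨0, ht⟩⟩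
  have hM1 : 1 ≤ M := by
    obtain ⟨h₀, hh₀⟩ := hHne
    calc (1:ℕ∞) ≤ covNum (distF h₀ ⟨0, ht⟩) F ε₂ := one_le_covNum _ _ hFne
      _ ≤ M := by
          rw [hM]
          exact le_iSup₂_of_le (⟨h₀, hh₀⟩ : H) ⟨0, ht⟩ le_rfl
  have hN1 : 1 ≤ covNum distH H ε₁ := one_le_covNum _ _ hHne
  -- if RHS is ⊤, done
  rcases eq_or_ne (covNum distH H ε₁ * M ^ t) ⊤ with hT | hT
  · rw [hT]; exact le_top
  have hMne0 : M ≠ 0 := by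
    intro h0; rw [h0] at hM1; exact absurd hM1 (by simp)
  have hMtne0 : M ^ t ≠ 0 := pow_ne_zero t hMne0
  have hNne0 : covNum distH H ε₁ ≠ 0 := by
    intro h0; rw [h0] at hN1; exact absurd hN1 (by simp)
  have hNfin : covNum distH H ε₁ ≠ ⊤ := by
    intro h; apply hT; rw [h]; exact ENat.top_mul hMtne0
  have hMfin : M ≠ ⊤ := by
    intro h; apply hT
    have : M ^ t = ⊤ := by rw [h]; exact ENat.top_pow ht.ne'
    rw [this]; exact ENat.mul_top hNne0
  clear_value M
  lift M to ℕ using hMfin with m hm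
  -- get a cover of H
  obtain ⟨CH, hCH, hCHcard⟩ := exists_cover_le distH H ε₁ hNfin
  -- get covers of F for each c ∈ CH and j
  have key : ∀ c : {c // c ∈ CH}, ∀ j : Fin t,
      ∃ Cf : Finset ((Fin r → ℝ) → ℝ), IsCover (distF c.1 j) F (Cf : Set _) ε₂ ∧
        Cf.card ≤ m := by
    intro c j
    have hcH : c.1 ∈ H := hCH.1 c.2
    have hle : covNum (distF c.1 j) F ε₂ ≤ (m : ℕ∞) := by
      rw [hM]
      exact le_iSup₂_of_le (⟨c.1, hcH⟩ : H) j le_rfl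
    obtain ⟨Cf, h1, h2⟩ := exists_cover_le (distF c.1 j) F ε₂
      (fun h => by rw [h] at hle; exact absurd hle (by simp))
    exact ⟨Cf, h1, by exact_mod_cast h2.trans hle⟩
  choose Cf hCf hCfcard using key
  -- build the composed cover
  set D : Finset ((Fin t → (Fin r → ℝ) → ℝ) × ((Fin d → ℝ) → (Fin r → ℝ))) :=
    CH.attach.biUnion (fun c =>
      (Fintype.piFinset (fun j => Cf c j)).image (fun g => (g, c.1))) with hD
  have hDsub : (D : Set _) ⊆ AP := by
    intro p hp
    simp only [hD, Finset.coe_biUnion, Finset.mem_coe, Finset.mem_attach,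
      Set.mem_iUnion, Finset.mem_image, Fintype.mem_piFinset] at hp
    obtain ⟨c, -, g, hg, rfl⟩ := hp
    exact ⟨fun j => (hCf c j).1 (hg j), hCH.1 c.2⟩
  have hDcov : ∀ p ∈ AP, ∃ q ∈ (D : Set _), distP p q ≤ LF * ε₁ + ε₂ := by
    rintro ⟨f, h⟩ ⟨hf, hh⟩
    obtain ⟨c, hcC, hcd⟩ := hCH.2 h hh
    rw [Finset.mem_coe] at hcC
    have hgex : ∀ j : Fin t, ∃ gj ∈ Cf ⟨c, hcC⟩ j, distF c j (f j) gj ≤ ε₂ :=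
      fun j => (hCf ⟨c, hcC⟩ j).2 (f j) (hf j)
    choose g hg1 hg2 using hgex
    refine ⟨(g, c), ?_, ?_⟩
    · simp only [hD, Finset.coe_biUnion, Finset.mem_coe, Finset.mem_attach,
        Set.mem_iUnion, Finset.mem_image, Fintype.mem_piFinset]
      exact ⟨⟨c, hcC⟩, trivial, g, fun j => hg1 j, rfl⟩
    · exact analytic_bound hn ht LF ε₁ ε₂ hLF hε₁.le hε₂.le f g
        (fun j i => h (x j i)) (fun j i => c (x j i))
        (fun j => hLip (f j) (hf j)) hcd hg2
  have hDcover : IsCover distP AP (D : Set _) (LF * ε₁ + ε₂) := ⟨hDsub, hDcov⟩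
  -- cardinality bound
  have hDcard : D.card ≤ CH.card * m ^ t := by
    calc D.card ≤ ∑ c ∈ CH.attach,
          ((Fintype.piFinset (fun j => Cf c j)).image (fun g => (g, c.1))).card :=
        Finset.card_biUnion_le
      _ ≤ ∑ c ∈ CH.attach, m ^ t := by
          refine Finset.sum_le_sum fun c _ => ?_
          calc ((Fintype.piFinset (fun j => Cf c j)).image (fun g => (g, c.1))).card
              ≤ (Fintype.piFinset (fun j => Cf c j)).card := Finset.card_image_le
            _ = ∏ j : Fin t, (Cf c j).card := Fintype.card_piFinset _
            _ ≤ ∏ _j : Fin t, m := Finset.prod_le_prod' fun j _ => hCfcard c j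
            _ = m ^ t := by simp
      _ = CH.card * m ^ t := by simp [Finset.card_attach]
  calc covNum distP AP (LF * ε₁ + ε₂) ≤ (D.card : ℕ∞) :=
      covNum_le_card _ _ _ _ hDcover
    _ ≤ ((CH.card * m ^ t : ℕ) : ℕ∞) := by exact_mod_cast hDcard
    _ = (CH.card : ℕ∞) * (m : ℕ∞) ^ t := by push_cast; ring
    _ ≤ covNum distH H ε₁ * (m : ℕ∞) ^ t := by
        exact mul_le_mul_left hCHcard _
end
end

section
/- Consider the regression model y = (α_j*)^T h*(x) + η for tasks j = 1,…,t, where x ∼ P_x, the noise η is mean-zero with finite second moment and independent of x, h*: ℝ^d → ℝ^r is the true representation, and the loss is the squared loss ℓ(a, y) = (y − a)². For two representations ĥ, h*: ℝ^d → ℝ^r, define the block covariance Λ(ĥ, h*) = [[E_x[ĥ(x)ĥ(x)^T], E_x[ĥ(x)h*(x)^T]],[E_x[h*(x)ĥ(x)^T], E_x[h*(x)h*(x)^T]]] and suppose F_{ĥĥ} = E_x[ĥ(x)ĥ(x)^T] is positive definite; let Λ_sc(ĥ, h*) = E_x[h*(x)h*(x)^T] − E_x[h*(x)ĥ(x)^T]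 F_{ĥĥ}^{−1} E_x[ĥ(x)h*(x)^T]. With task class F = ℝ^r (all linear maps α̂) and test class F_0 = {α : ‖α‖₂ ≤ c₂}: the worst-case representation difference equals d_{F,F_0}(ĥ; h*) = sup_{‖α₀‖₂≤c₂} α₀^T Λ_sc(ĥ, h*) α₀ = c₂²·λ_max(Λ_sc(ĥ, h*)), the task-averaged representation difference equals d̄_{F,f*}(ĥ; h*) = tr( Λ_sc(ĥ, h*)·C ) where C = (1/t)∑_{j=1}^t α_j*(α_j*)^T, and tr(Λ_sc·C) ≥ λ_max(Λ_sc)·λ_min(C). Consequently, if ν̃ = λ_min(C) > 0, then for every such ĥ: d_{F,F_0}(ĥ; h*) ≤ (c₂²/ν̃)·d̄_{F,f*}(ĥ; h*). -/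
/-! Statement 14: for linear task maps under the squared loss, the worst-case
representation difference equals `c₂²·λmax(Λ_sc)`, the task-averaged
representation difference equals `tr(Λ_sc·C)` with `C = (1/t)∑ αⱼ*αⱼ*ᵀ`,
`tr(Λ_sc·C) ≥ λmax(Λ_sc)·λmin(C)`, and hence diversity holds with
`d ≤ (c₂²/ν̃)·d̄` whenever `ν̃ = λmin(C) > 0`. -/

open MeasureTheory Matrix

noncomputable section

/-- Largest eigenvalue (Rayleigh quotient supremum) of a square matrix. -/
def lamMax {n : ℕ} (M : Matrix (Fin n) (Fin n) ℝ) : ℝ :=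
  sSup {e : ℝ | ∃ v : Fin n → ℝ, (∑ i, v i ^ 2) = 1 ∧ e = v ⬝ᵥ M.mulVec v}

/-- Smallest eigenvalue (Rayleigh quotient infimum) of a square matrix. -/
def lamMin {n : ℕ} (M : Matrix (Fin n) (Fin n) ℝ) : ℝ :=
  sInf {e : ℝ | ∃ v : Fin n → ℝ, (∑ i, v i ^ 2) = 1 ∧ e = v ⬝ᵥ M.mulVec v}

namespace Stmt14

def raySet {n : ℕ} (M : Matrix (Fin n) (Fin n) ℝ) : Set ℝ :=
  {e : ℝ | ∃ v : Fin n → ℝ, (∑ i, v i ^ 2) = 1 ∧ e = v ⬝ᵥ M.mulVec v}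

lemma lamMax_eq {n : ℕ} (M : Matrix (Fin n) (Fin n) ℝ) : lamMax M = sSup (raySet M) := rfl
lemma lamMin_eq {n : ℕ} (M : Matrix (Fin n) (Fin n) ℝ) : lamMin M = sInf (raySet M) := rfl

lemma dot_expand {n : ℕ} (M : Matrix (Fin n) (Fin n) ℝ) (u w : Fin n → ℝ) :
    u ⬝ᵥ M *ᵥ w = ∑ k, ∑ l, (u k * w l) * M k l := by
  simp only [dotProduct, Matrix.mulVec, Finset.mul_sum]
  exact Finset.sum_congr rfl fun k _ => Finset.sum_congr rfl fun l _ => by ring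

lemma quad_abs_le {n : ℕ} (M : Matrix (Fin n) (Fin n) ℝ) (v : Fin n → ℝ) (c : ℝ) (hc : 0 ≤ c)
    (h : ∀ i, |v i| ≤ c) : |v ⬝ᵥ M *ᵥ v| ≤ c ^ 2 * ∑ i, ∑ j, |M i j| := by
  rw [dot_expand]
  calc |∑ k, ∑ l, (v k * v l) * M k l| ≤ ∑ k, |∑ l, (v k * v l) * M k l| :=
        Finset.abs_sum_le_sum_abs _ _
    _ ≤ ∑ k, ∑ l, |(v k * v l) * M k l| :=
        Finset.sum_le_sum fun k _ => Finset.abs_sum_le_sum_abs _ _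
    _ ≤ ∑ k, ∑ l, c ^ 2 * |M k l| := by
        refine Finset.sum_le_sum fun k _ => Finset.sum_le_sum fun l _ => ?_
        rw [abs_mul, abs_mul, sq]
        have h1 := h k
        have h2 := h l
        have := abs_nonneg (v k)
        have := abs_nonneg (v l)
        have := abs_nonneg (M k l)
        nlinarith [mul_le_mul h1 h2 (abs_nonneg (v l)) hc]
    _ = c ^ 2 * ∑ i, ∑ j, |M i j| := by simp [Finset.mul_sum]

lemma abs_le_one_of_unit {n : ℕ} {v : Fin n → ℝ} (hv : (∑ i, v i ^ 2) = 1) (i : Fin n) :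
    |v i| ≤ 1 := by
  have h1 : v i ^ 2 ≤ 1 := by
    rw [← hv]
    exact Finset.single_le_sum (fun j _ => sq_nonneg (v j)) (Finset.mem_univ i)
  have := Real.sqrt_le_sqrt h1
  rwa [Real.sqrt_sq_eq_abs, Real.sqrt_one] at this

lemma raySet_bddAbove {n : ℕ} (M : Matrix (Fin n) (Fin n) ℝ) : BddAbove (raySet M) := by
  refine ⟨∑ i, ∑ j, |M i j|, fun e ⟨v, hv, he⟩ => ?_⟩
  have := quad_abs_le M v 1 zero_le_one (abs_le_one_of_unit hv)
  rw [he]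
  calc v ⬝ᵥ M *ᵥ v ≤ |v ⬝ᵥ M *ᵥ v| := le_abs_self _
    _ ≤ 1 ^ 2 * ∑ i, ∑ j, |M i j| := this
    _ = ∑ i, ∑ j, |M i j| := by ring

lemma raySet_bddBelow {n : ℕ} (M : Matrix (Fin n) (Fin n) ℝ) : BddBelow (raySet M) := by
  refine ⟨-∑ i, ∑ j, |M i j|, fun e ⟨v, hv, he⟩ => ?_⟩
  have := quad_abs_le M v 1 zero_le_one (abs_le_one_of_unit hv)
  rw [he]
  have h2 : |v ⬝ᵥ M *ᵥ v| ≤ ∑ i, ∑ j, |M i j| := by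
    calc |v ⬝ᵥ M *ᵥ v| ≤ 1 ^ 2 * ∑ i, ∑ j, |M i j| := this
      _ = ∑ i, ∑ j, |M i j| := by ring
  linarith [neg_abs_le (v ⬝ᵥ M *ᵥ v)]

lemma raySet_nonempty {n : ℕ} (hn : 0 < n) (M : Matrix (Fin n) (Fin n) ℝ) :
    (raySet M).Nonempty := by
  refine ⟨_, Pi.single ⟨0, hn⟩ 1, ?_, rfl⟩
  simp [Pi.single_apply]

lemma trace_mul_vecMulVec {n : ℕ} (M : Matrix (Fin n) (Fin n) ℝ) (a : Fin n → ℝ) :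
    (M * vecMulVec a a).trace = a ⬝ᵥ M *ᵥ a := by
  simp only [Matrix.trace, Matrix.diag, Matrix.mul_apply, Matrix.vecMulVec_apply,
    dotProduct, Matrix.mulVec, Finset.mul_sum]
  exact Finset.sum_congr rfl fun i _ => Finset.sum_congr rfl fun k _ => by ring

lemma quad_vecMulVec {n : ℕ} (a b u : Fin n → ℝ) :
    u ⬝ᵥ (vecMulVec a b) *ᵥ u = (u ⬝ᵥ a) * (b ⬝ᵥ u) := by
  simp only [dotProduct, Matrix.mulVec, Matrix.vecMulVec_apply, Finset.mul_sum, Finset.sum_mul]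
  rw [Finset.sum_comm]
  exact Finset.sum_congr rfl fun i _ => Finset.sum_congr rfl fun k _ => by ring

lemma psd_quad {n : ℕ} {M : Matrix (Fin n) (Fin n) ℝ} (hM : M.PosSemidef) (v : Fin n → ℝ) :
    0 ≤ v ⬝ᵥ M *ᵥ v := by simpa using hM.dotProduct_mulVec_nonneg v

lemma psd_of_symm_quad {n : ℕ} {M : Matrix (Fin n) (Fin n) ℝ} (hsymm : Mᵀ = M)
    (h : ∀ v, 0 ≤ v ⬝ᵥ M *ᵥ v) : M.PosSemidef := by
  refine Matrix.PosSemidef.of_dotProduct_mulVec_nonneg ?_ fun v => by simpa using h v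
  rw [Matrix.IsHermitian, Matrix.conjTranspose_eq_transpose_of_trivial, hsymm]

lemma psd_trace_nonneg {n : ℕ} {M : Matrix (Fin n) (Fin n) ℝ} (hM : M.PosSemidef) :
    0 ≤ M.trace := by
  rw [Matrix.trace]
  refine Finset.sum_nonneg fun i _ => ?_
  have := psd_quad hM (Pi.single i 1)
  simpa [dotProduct, Matrix.mulVec, Pi.single_apply, Finset.mul_sum, Matrix.diag] using this

open scoped MatrixOrder in
lemma psd_trace_mul_nonneg {n : ℕ} {A B : Matrix (Fin n) (Fin n) ℝ}
    (hA : A.PosSemidef) (hB : B.PosSemidef) : 0 ≤ (A * B).trace := by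
  have h1 : A = CFC.sqrt A * CFC.sqrt A := (CFC.sqrt_mul_sqrt_self A hA.nonneg).symm
  have h2 : (A * B).trace = (CFC.sqrt A * B * CFC.sqrt A).trace := by
    conv_lhs => rw [h1, mul_assoc]
    rw [Matrix.trace_mul_comm, mul_assoc]
  rw [h2]
  have h3 : CFC.sqrt A * B * CFC.sqrt A = CFC.sqrt A * B * (CFC.sqrt A)ᴴ := by
    rw [(CFC.sqrt_nonneg A).posSemidef.isHermitian.eq]
  rw [h3]
  exact psd_trace_nonneg (hB.mul_mul_conjTranspose_same _)

lemma integral_sq_expand {X : Type*} [MeasurableSpace X] {r : ℕ}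
    (Px : Measure X)
    (hhat hstar : X → Fin r → ℝ)
    (hint : ∀ u v : X → Fin r → ℝ, (u = hhat ∨ u = hstar) → (v = hhat ∨ v = hstar) →
      ∀ k l : Fin r, Integrable (fun x => u x k * v x l) Px)
    (Fhh Fhs Fss : Matrix (Fin r) (Fin r) ℝ)
    (hFhh : Fhh = Matrix.of fun k l => ∫ x, hhat x k * hhat x l ∂Px)
    (hFhs : Fhs = Matrix.of fun k l => ∫ x, hhat x k * hstar x l ∂Px)
    (hFss : Fss = Matrix.of fun k l => ∫ x, hstar x k * hstar x l ∂Px)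
    (a b : Fin r → ℝ) :
    (∫ x, ((∑ i, a i * hhat x i) - (∑ i, b i * hstar x i)) ^ 2 ∂Px)
      = a ⬝ᵥ Fhh *ᵥ a - 2 * (a ⬝ᵥ Fhs *ᵥ b) + b ⬝ᵥ Fss *ᵥ b := by
  have hi : ∀ k l : Fin r, Integrable (fun x =>
      (a k * a l) * (hhat x k * hhat x l)
      - (a k * b l) * (hhat x k * hstar x l)
      - (b k * a l) * (hhat x l * hstar x k)
      + (b k * b l) * (hstar x k * hstar x l)) Px := fun k l =>
    ((((hint hhat hhat (Or.inl rfl) (Or.inl rfl) k l).const_mul _).sub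
      ((hint hhat hstar (Or.inl rfl) (Or.inr rfl) k l).const_mul _)).sub
      ((hint hhat hstar (Or.inl rfl) (Or.inr rfl) l k).const_mul _)).add
      ((hint hstar hstar (Or.inr rfl) (Or.inr rfl) k l).const_mul _)
  have hpt : ∀ x : X, ((∑ i, a i * hhat x i) - (∑ i, b i * hstar x i)) ^ 2
      = ∑ k, ∑ l, ((a k * a l) * (hhat x k * hhat x l)
      - (a k * b l) * (hhat x k * hstar x l)
      - (b k * a l) * (hhat x l * hstar x k)
      + (b k * b l) * (hstar x k * hstar x l)) := by
    intro x
    rw [← Finset.sum_sub_distrib, sq, Finset.sum_mul_sum]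
    exact Finset.sum_congr rfl fun k _ => Finset.sum_congr rfl fun l _ => by ring
  calc (∫ x, ((∑ i, a i * hhat x i) - (∑ i, b i * hstar x i)) ^ 2 ∂Px)
      = ∫ x, ∑ k, ∑ l, ((a k * a l) * (hhat x k * hhat x l)
        - (a k * b l) * (hhat x k * hstar x l)
        - (b k * a l) * (hhat x l * hstar x k)
        + (b k * b l) * (hstar x k * hstar x l)) ∂Px := by
        exact integral_congr_ae (Filter.Eventually.of_forall hpt)
    _ = ∑ k, ∑ l, ∫ x, ((a k * a l) * (hhat x k * hhat x l)
        - (a k * b l) * (hhat x k * hstar x l)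
        - (b k * a l) * (hhat x l * hstar x k)
        + (b k * b l) * (hstar x k * hstar x l)) ∂Px := by
        rw [integral_finset_sum _ (fun k _ => integrable_finset_sum _ (fun l _ => hi k l))]
        exact Finset.sum_congr rfl fun k _ => integral_finset_sum _ (fun l _ => hi k l)
    _ = ∑ k, ∑ l, ((a k * a l) * Fhh k l - (a k * b l) * Fhs k l
        - (b k * a l) * Fhs l k + (b k * b l) * Fss k l) := by
        refine Finset.sum_congr rfl fun k _ => Finset.sum_congr rfl fun l _ => ?_
        rw [integral_add, integral_sub, integral_sub, integral_const_mul, integral_const_mul,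
          integral_const_mul, integral_const_mul, hFhh, hFhs, hFss]
        · rfl
        · exact (hint hhat hhat (Or.inl rfl) (Or.inl rfl) k l).const_mul _
        · exact (hint hhat hstar (Or.inl rfl) (Or.inr rfl) k l).const_mul _
        · exact ((hint hhat hhat (Or.inl rfl) (Or.inl rfl) k l).const_mul _).sub
            ((hint hhat hstar (Or.inl rfl) (Or.inr rfl) k l).const_mul _)
        · exact (hint hhat hstar (Or.inl rfl) (Or.inr rfl) l k).const_mul _
        · exact (((hint hhat hhat (Or.inl rfl) (Or.inl rfl) k l).const_mul _).sub
            ((hint hhat hstar (Or.inl rfl) (Or.inr rfl) k l).const_mul _)).sub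
            ((hint hhat hstar (Or.inl rfl) (Or.inr rfl) l k).const_mul _)
        · exact (hint hstar hstar (Or.inr rfl) (Or.inr rfl) k l).const_mul _
    _ = a ⬝ᵥ Fhh *ᵥ a - 2 * (a ⬝ᵥ Fhs *ᵥ b) + b ⬝ᵥ Fss *ᵥ b := by
        rw [dot_expand, dot_expand, dot_expand]
        simp only [Finset.sum_add_distrib, Finset.sum_sub_distrib]
        have hswap : ∑ k, ∑ l, (b k * a l) * Fhs l k = ∑ k, ∑ l, (a k * b l) * Fhs k l := by
          rw [Finset.sum_comm]
          exact Finset.sum_congr rfl fun k _ => Finset.sum_congr rfl fun l _ => by ring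
        linarith [hswap]

lemma inf_quadratic {r : ℕ} (Fhh Fhs Fss Lsc : Matrix (Fin r) (Fin r) ℝ)
    (hpos : Fhh.PosDef) (hLsc : Lsc = Fss - Fhsᵀ * Fhh⁻¹ * Fhs)
    (f : (Fin r → ℝ) → ℝ) (b : Fin r → ℝ)
    (hf : ∀ a, f a = a ⬝ᵥ Fhh *ᵥ a - 2 * (a ⬝ᵥ Fhs *ᵥ b) + b ⬝ᵥ Fss *ᵥ b) :
    (⨅ a, f a) = b ⬝ᵥ Lsc *ᵥ b := by
  have hinv1 : Fhh * Fhh⁻¹ = 1 := Matrix.mul_nonsing_inv _ hpos.det_pos.ne'.isUnit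
  have hsym : Fhhᵀ = Fhh := by
    have := hpos.isHermitian
    rwa [Matrix.IsHermitian, Matrix.conjTranspose_eq_transpose_of_trivial] at this
  set β := Fhh⁻¹ *ᵥ (Fhs *ᵥ b) with hβ
  have hFβ : Fhh *ᵥ β = Fhs *ᵥ b := by
    rw [hβ, Matrix.mulVec_mulVec, hinv1, Matrix.one_mulVec]
  have hq : ∀ a, f a = (a - β) ⬝ᵥ Fhh *ᵥ (a - β) + b ⬝ᵥ Lsc *ᵥ b := by
    intro a
    rw [hf, hLsc]
    have e1 : (a - β) ⬝ᵥ Fhh *ᵥ (a - β)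
        = a ⬝ᵥ Fhh *ᵥ a - a ⬝ᵥ (Fhh *ᵥ β) - β ⬝ᵥ (Fhh *ᵥ a) + β ⬝ᵥ (Fhh *ᵥ β) := by
      rw [Matrix.mulVec_sub, sub_dotProduct, dotProduct_sub,
        dotProduct_sub]
      ring
    have e2 : β ⬝ᵥ (Fhh *ᵥ a) = a ⬝ᵥ (Fhs *ᵥ b) := by
      rw [Matrix.dotProduct_mulVec, ← hsym, Matrix.vecMul_transpose, hFβ,
        dotProduct_comm]
    have e4 : b ⬝ᵥ ((Fhsᵀ * Fhh⁻¹ * Fhs) *ᵥ b) = β ⬝ᵥ (Fhs *ᵥ b) := by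
      rw [show (Fhsᵀ * Fhh⁻¹ * Fhs) *ᵥ b = Fhsᵀ *ᵥ (Fhh⁻¹ *ᵥ (Fhs *ᵥ b)) by
        rw [Matrix.mulVec_mulVec, Matrix.mulVec_mulVec]]
      rw [Matrix.dotProduct_mulVec, Matrix.vecMul_transpose, dotProduct_comm, ← hβ]
    rw [e1, e2, hFβ, Matrix.sub_mulVec, dotProduct_sub, e4]
    ring
  have hlb : ∀ a, b ⬝ᵥ Lsc *ᵥ b ≤ f a := by
    intro a
    rw [hq a]
    have h0 : (0:ℝ) ≤ (a - β) ⬝ᵥ Fhh *ᵥ (a - β) := by simpa using hpos.posSemidef.dotProduct_mulVec_nonneg (a - β)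
    linarith
  apply le_antisymm
  · have hfβ : f β = b ⬝ᵥ Lsc *ᵥ b := by
      rw [hq β]
      simp
    exact hfβ ▸ ciInf_le ⟨b ⬝ᵥ Lsc *ᵥ b, by rintro y ⟨a, rfl⟩; exact hlb a⟩ β
  · exact le_ciInf hlb

lemma sup_ball {n : ℕ} (hn : 0 < n) (L : Matrix (Fin n) (Fin n) ℝ) (c : ℝ) (hc : 0 < c)
    (hpsd : ∀ v, 0 ≤ v ⬝ᵥ L *ᵥ v) :
    (⨆ a : {a : Fin n → ℝ // eNorm a ≤ c}, a.1 ⬝ᵥ L *ᵥ a.1) = c ^ 2 * sSup (raySet L) := by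
  have hbddA := raySet_bddAbove L
  have hne := raySet_nonempty hn L
  set lamM := sSup (raySet L) with hlM
  have hlam_nonneg : 0 ≤ lamM := by
    obtain ⟨e, v, hv, he⟩ := hne
    exact le_trans (he ▸ hpsd v) (le_csSup hbddA ⟨v, hv, he⟩)
  have hub : ∀ a : Fin n → ℝ, eNorm a ≤ c → a ⬝ᵥ L *ᵥ a ≤ c ^ 2 * lamM := by
    intro a ha
    set s := ∑ i, a i ^ 2 with hs
    have hs0 : 0 ≤ s := Finset.sum_nonneg fun i _ => sq_nonneg _
    have hsc : s ≤ c ^ 2 := by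
      have h1 := Real.sq_sqrt hs0
      have h2 : Real.sqrt s ≤ c := ha
      nlinarith [Real.sqrt_nonneg s]
    by_cases hz : s = 0
    · have haz : a = 0 := by
        funext i
        have h3 : a i ^ 2 = 0 :=
          (Finset.sum_eq_zero_iff_of_nonneg (fun j _ => sq_nonneg (a j))).mp hz i
            (Finset.mem_univ i)
        exact pow_eq_zero_iff (two_ne_zero) |>.mp h3
      rw [haz]
      simpa using mul_nonneg (sq_nonneg c) hlam_nonneg
    · have hspos : 0 < s := lt_of_le_of_ne hs0 (Ne.symm hz)
      set v := (Real.sqrt s)⁻¹ • a with hvdef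
      have hv1 : (∑ i, v i ^ 2) = 1 := by
        have h4 : ∑ i, v i ^ 2 = ((Real.sqrt s)⁻¹) ^ 2 * s := by
          rw [hs, Finset.mul_sum]
          exact Finset.sum_congr rfl fun i _ => by simp [hvdef, mul_pow, hs]
        rw [h4, inv_pow, Real.sq_sqrt hs0, inv_mul_cancel₀ hz]
      have hinv2 : (Real.sqrt s)⁻¹ * (Real.sqrt s)⁻¹ = s⁻¹ := by
        rw [← mul_inv, Real.mul_self_sqrt hs0]
      have hval : v ⬝ᵥ L *ᵥ v = s⁻¹ * (a ⬝ᵥ L *ᵥ a) := by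
        rw [hvdef, smul_dotProduct, Matrix.mulVec_smul, dotProduct_smul]
        simp only [smul_eq_mul]
        rw [← mul_assoc, hinv2]
      have hAa : a ⬝ᵥ L *ᵥ a = s * (v ⬝ᵥ L *ᵥ v) := by
        rw [hval, ← mul_assoc, mul_inv_cancel₀ hz, one_mul]
      have hle : v ⬝ᵥ L *ᵥ v ≤ lamM := le_csSup hbddA ⟨v, hv1, rfl⟩
      have h5 : s * (v ⬝ᵥ L *ᵥ v) ≤ s * lamM := mul_le_mul_of_nonneg_left hle hs0
      have h6 : s * lamM ≤ c ^ 2 * lamM := mul_le_mul_of_nonneg_right hsc hlam_nonneg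
      linarith [hAa.le, hAa.ge]
  have hzero_mem : eNorm (0 : Fin n → ℝ) ≤ c := by
    simp [eNorm]
    positivity
  have hbddR : BddAbove (Set.range fun a : {a : Fin n → ℝ // eNorm a ≤ c} =>
      a.1 ⬝ᵥ L *ᵥ a.1) := by
    refine ⟨c ^ 2 * lamM, ?_⟩
    rintro y ⟨a, rfl⟩
    exact hub a.1 a.2
  haveI : Nonempty {a : Fin n → ℝ // eNorm a ≤ c} := ⟨⟨0, hzero_mem⟩⟩
  apply le_antisymm
  · exact ciSup_le fun a => hub a.1 a.2
  · have hkey : ∀ e ∈ raySet L, c ^ 2 * e ≤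
        ⨆ a : {a : Fin n → ℝ // eNorm a ≤ c}, a.1 ⬝ᵥ L *ᵥ a.1 := by
      rintro e ⟨v, hv, rfl⟩
      have hmem : eNorm (c • v) ≤ c := by
        have h8 : ∑ i, (c • v) i ^ 2 = c ^ 2 := by
          rw [show (c:ℝ)^2 = c^2 * 1 by ring, ← hv, Finset.mul_sum]
          exact Finset.sum_congr rfl fun i _ => by simp [mul_pow]
        rw [eNorm, h8, Real.sqrt_sq hc.le]
      have hval : (c • v) ⬝ᵥ L *ᵥ (c • v) = c ^ 2 * (v ⬝ᵥ L *ᵥ v) := by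
        rw [smul_dotProduct, Matrix.mulVec_smul, dotProduct_smul]
        simp only [smul_eq_mul]
        ring
      calc c ^ 2 * (v ⬝ᵥ L *ᵥ v) = (c • v) ⬝ᵥ L *ᵥ (c • v) := hval.symm
        _ ≤ _ := le_ciSup hbddR ⟨c • v, hmem⟩
    have h7 : lamM ≤ (⨆ a : {a : Fin n → ℝ // eNorm a ≤ c}, a.1 ⬝ᵥ L *ᵥ a.1) / c ^ 2 := by
      refine csSup_le hne fun e he => ?_
      rw [le_div_iff₀ (by positivity)]
      calc e * c ^ 2 = c ^ 2 * e := by ring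
        _ ≤ _ := hkey e he
    calc c ^ 2 * lamM ≤ c ^ 2 * ((⨆ a : {a : Fin n → ℝ // eNorm a ≤ c},
          a.1 ⬝ᵥ L *ᵥ a.1) / c ^ 2) := mul_le_mul_of_nonneg_left h7 (by positivity)
      _ = _ := by field_simp

lemma quad_scale {n : ℕ} (M : Matrix (Fin n) (Fin n) ℝ) (w : Fin n → ℝ) {s : ℝ} (hs : 0 < s)
    (hw : ∑ i, w i ^ 2 = s)
    (hray : sInf (raySet M) ≤ ((Real.sqrt s)⁻¹ • w) ⬝ᵥ M *ᵥ ((Real.sqrt s)⁻¹ • w)) :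
    sInf (raySet M) * s ≤ w ⬝ᵥ M *ᵥ w := by
  have hs0 : (0:ℝ) ≤ s := hs.le
  have hz : s ≠ 0 := hs.ne'
  set v := (Real.sqrt s)⁻¹ • w with hvdef
  have hinv2 : (Real.sqrt s)⁻¹ * (Real.sqrt s)⁻¹ = s⁻¹ := by
    rw [← mul_inv, Real.mul_self_sqrt hs0]
  have hval : v ⬝ᵥ M *ᵥ v = s⁻¹ * (w ⬝ᵥ M *ᵥ w) := by
    rw [hvdef, smul_dotProduct, Matrix.mulVec_smul, dotProduct_smul]
    simp only [smul_eq_mul]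
    rw [← mul_assoc, hinv2]
  have := mul_le_mul_of_nonneg_right hray hs0
  rw [hval] at this
  calc sInf (raySet M) * s ≤ s⁻¹ * (w ⬝ᵥ M *ᵥ w) * s := this
    _ = w ⬝ᵥ M *ᵥ w := by field_simp

lemma unit_of_scale {n : ℕ} (w : Fin n → ℝ) {s : ℝ} (hs : 0 < s) (hw : ∑ i, w i ^ 2 = s) :
    (∑ i, ((Real.sqrt s)⁻¹ • w) i ^ 2) = 1 := by
  have h4 : ∑ i, ((Real.sqrt s)⁻¹ • w) i ^ 2 = ((Real.sqrt s)⁻¹) ^ 2 * s := by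
    rw [← hw, Finset.mul_sum]
    exact Finset.sum_congr rfl fun i _ => by simp [mul_pow]
  rw [h4, inv_pow, Real.sq_sqrt hs.le, inv_mul_cancel₀ hs.ne']

lemma lamMin_smul_le {n : ℕ} (M : Matrix (Fin n) (Fin n) ℝ) (w : Fin n → ℝ) :
    sInf (raySet M) * (∑ i, w i ^ 2) ≤ w ⬝ᵥ M *ᵥ w := by
  set s := ∑ i, w i ^ 2 with hs
  have hs0 : 0 ≤ s := Finset.sum_nonneg fun i _ => sq_nonneg _
  rcases eq_or_lt_of_le hs0 with hz | hspos
  · have haz : w = 0 := by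
      funext i
      have h3 : w i ^ 2 = 0 :=
        (Finset.sum_eq_zero_iff_of_nonneg (fun j _ => sq_nonneg (w j))).mp hz.symm i
          (Finset.mem_univ i)
      exact pow_eq_zero_iff (two_ne_zero) |>.mp h3
    rw [haz, ← hz]
    simp
  · exact quad_scale M w hspos rfl
      (csInf_le (raySet_bddBelow M) ⟨_, unit_of_scale w hspos rfl, rfl⟩)

lemma trace_ineq {n : ℕ} (hn : 0 < n) (L C : Matrix (Fin n) (Fin n) ℝ)
    (hL : L.PosSemidef) (hC : C.PosSemidef) :
    sSup (raySet L) * sInf (raySet C) ≤ (L * C).trace := by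
  have hneL := raySet_nonempty hn L
  have hneC := raySet_nonempty hn C
  set ν := sInf (raySet C) with hν
  have hν0 : 0 ≤ ν := le_csInf hneC fun e ⟨v, hv, he⟩ => he ▸ psd_quad hC v
  have hCsym : Cᵀ = C := by
    have := hC.isHermitian
    rwa [Matrix.IsHermitian, Matrix.conjTranspose_eq_transpose_of_trivial] at this
  -- shifted matrix is PSD
  have hshift : (C - ν • (1 : Matrix (Fin n) (Fin n) ℝ)).PosSemidef := by
    apply psd_of_symm_quad
    · rw [Matrix.transpose_sub, hCsym, Matrix.transpose_smul, Matrix.transpose_one]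
    · intro w
      have h1 : w ⬝ᵥ (C - ν • (1 : Matrix (Fin n) (Fin n) ℝ)) *ᵥ w
          = w ⬝ᵥ C *ᵥ w - ν * ∑ i, w i ^ 2 := by
        rw [Matrix.sub_mulVec, dotProduct_sub, Matrix.smul_mulVec,
          Matrix.one_mulVec, dotProduct_smul]
        simp only [smul_eq_mul]
        congr 1
        simp [dotProduct, sq]
      rw [h1]
      linarith [lamMin_smul_le C w]
  -- trace of product of PSD with shift
  have h2 : 0 ≤ (L * (C - ν • (1 : Matrix (Fin n) (Fin n) ℝ))).trace :=
    psd_trace_mul_nonneg hL hshift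
  have h3 : (L * (C - ν • (1 : Matrix (Fin n) (Fin n) ℝ))).trace
      = (L * C).trace - ν * L.trace := by
    rw [Matrix.mul_sub, Matrix.trace_sub, Matrix.mul_smul, Matrix.trace_smul, mul_one]
    simp [smul_eq_mul]
  -- lamMax L ≤ trace L
  have h4 : sSup (raySet L) ≤ L.trace := by
    refine csSup_le hneL fun e he => ?_
    obtain ⟨v, hv, rfl⟩ := he
    have hW : ((1 : Matrix (Fin n) (Fin n) ℝ) - vecMulVec v v).PosSemidef := by
      apply psd_of_symm_quad
      · rw [Matrix.transpose_sub, Matrix.transpose_one]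
        congr 1
        ext i j
        simp [Matrix.transpose_apply, Matrix.vecMulVec_apply, mul_comm]
      · intro w
        have h5 : w ⬝ᵥ ((1 : Matrix (Fin n) (Fin n) ℝ) - vecMulVec v v) *ᵥ w
            = (∑ i, w i ^ 2) - (∑ i, v i * w i) ^ 2 := by
          rw [Matrix.sub_mulVec, dotProduct_sub, Matrix.one_mulVec, quad_vecMulVec]
          congr 1
          · simp [dotProduct, sq]
          · rw [dotProduct_comm w v, sq]
            rfl
        rw [h5]
        have hcs := Finset.sum_mul_sq_le_sq_mul_sq Finset.univ v w
        rw [hv, one_mul] at hcs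
        linarith
    have h6 : 0 ≤ (L * ((1 : Matrix (Fin n) (Fin n) ℝ) - vecMulVec v v)).trace :=
      psd_trace_mul_nonneg hL hW
    rw [Matrix.mul_sub, Matrix.trace_sub, mul_one, trace_mul_vecMulVec] at h6
    linarith
  calc sSup (raySet L) * ν ≤ L.trace * ν :=
        mul_le_mul_of_nonneg_right h4 hν0
    _ ≤ (L * C).trace := by linarith

lemma quad_sum_mat {n t : ℕ} (W : Fin t → Matrix (Fin n) (Fin n) ℝ) (v : Fin n → ℝ) :
    v ⬝ᵥ (∑ j, W j) *ᵥ v = ∑ j, v ⬝ᵥ (W j) *ᵥ v := by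
  simp only [dot_expand, Matrix.sum_apply, Finset.mul_sum]
  conv_rhs => rw [Finset.sum_comm]
  refine Finset.sum_congr rfl fun k _ => ?_
  rw [Finset.sum_comm]

end Stmt14

theorem linear_task_diversity_squared_loss
    {X : Type*} [MeasurableSpace X] {r t : ℕ} (hr : 0 < r) (ht : 0 < t)
    (Px : Measure X) [IsProbabilityMeasure Px]
    (hhat hstar : X → Fin r → ℝ)
    (hint : ∀ u v : X → Fin r → ℝ, (u = hhat ∨ u = hstar) → (v = hhat ∨ v = hstar) →
      ∀ k l : Fin r, Integrable (fun x => u x k * v x l) Px)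
    (αs : Fin t → Fin r → ℝ) (c2 : ℝ) (hc2 : 0 < c2)
    (Fhh Fhs Fss Lsc Cmat : Matrix (Fin r) (Fin r) ℝ)
    (hFhh : Fhh = Matrix.of fun k l => ∫ x, hhat x k * hhat x l ∂Px)
    (hFhs : Fhs = Matrix.of fun k l => ∫ x, hhat x k * hstar x l ∂Px)
    (hFss : Fss = Matrix.of fun k l => ∫ x, hstar x k * hstar x l ∂Px)
    (hpos : Fhh.PosDef)
    (hLsc : Lsc = Fss - Fhsᵀ * Fhh⁻¹ * Fhs)
    (hC : Cmat = (t : ℝ)⁻¹ • ∑ j : Fin t, Matrix.vecMulVec (αs j) (αs j))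
    (dworst davg : ℝ)
    (hdw : dworst = ⨆ α0 : {a : Fin r → ℝ // eNorm a ≤ c2},
        ⨅ αh : Fin r → ℝ,
          ∫ x, ((∑ i, αh i * hhat x i) - (∑ i, α0.1 i * hstar x i)) ^ 2 ∂Px)
    (hda : davg = (t : ℝ)⁻¹ * ∑ j : Fin t, ⨅ αh : Fin r → ℝ,
        ∫ x, ((∑ i, αh i * hhat x i) - (∑ i, αs j i * hstar x i)) ^ 2 ∂Px) :
    dworst = c2 ^ 2 * lamMax Lsc ∧
    davg = (Lsc * Cmat).trace ∧
    lamMax Lsc * lamMin Cmat ≤ (Lsc * Cmat).trace ∧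
    (0 < lamMin Cmat → dworst ≤ (c2 ^ 2 / lamMin Cmat) * davg) := by
  have hmin : ∀ b : Fin r → ℝ,
      (⨅ αh : Fin r → ℝ,
        ∫ x, ((∑ i, αh i * hhat x i) - (∑ i, b i * hstar x i)) ^ 2 ∂Px)
        = b ⬝ᵥ Lsc *ᵥ b := fun b =>
    Stmt14.inf_quadratic Fhh Fhs Fss Lsc hpos hLsc _ b
      (fun a => Stmt14.integral_sq_expand Px hhat hstar hint Fhh Fhs Fss hFhh hFhs hFss a b)
  have hLnn : ∀ b, 0 ≤ b ⬝ᵥ Lsc *ᵥ b := by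
    intro b
    rw [← hmin b]
    exact le_ciInf fun a => integral_nonneg fun x => sq_nonneg _
  have hFhhsym : Fhhᵀ = Fhh := by
    have := hpos.isHermitian
    rwa [Matrix.IsHermitian, Matrix.conjTranspose_eq_transpose_of_trivial] at this
  have hFsssym : Fssᵀ = Fss := by
    rw [hFss]
    ext k l
    simp only [Matrix.transpose_apply, Matrix.of_apply]
    exact integral_congr_ae (Filter.Eventually.of_forall fun x => mul_comm _ _)
  have hLsym : Lscᵀ = Lsc := by
    rw [hLsc, Matrix.transpose_sub, hFsssym]
    congr 1
    rw [Matrix.transpose_mul, Matrix.transpose_mul, Matrix.transpose_transpose,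
      Matrix.transpose_nonsing_inv, hFhhsym, mul_assoc]
  have hLpsd : Lsc.PosSemidef := Stmt14.psd_of_symm_quad hLsym hLnn
  have hCquad : ∀ v, v ⬝ᵥ Cmat *ᵥ v = (t : ℝ)⁻¹ * ∑ j, (αs j ⬝ᵥ v) ^ 2 := by
    intro v
    rw [hC, Matrix.smul_mulVec, dotProduct_smul, Stmt14.quad_sum_mat]
    simp only [smul_eq_mul]
    congr 1
    refine Finset.sum_congr rfl fun j _ => ?_
    rw [Stmt14.quad_vecMulVec, dotProduct_comm v (αs j), sq]
  have hCsym : Cmatᵀ = Cmat := by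
    rw [hC]
    ext i j
    simp only [Matrix.transpose_apply, Matrix.smul_apply, Matrix.sum_apply,
      Matrix.vecMulVec_apply, smul_eq_mul]
    congr 1
    exact Finset.sum_congr rfl fun k _ => mul_comm _ _
  have hCpsd : Cmat.PosSemidef := by
    apply Stmt14.psd_of_symm_quad hCsym
    intro v
    rw [hCquad]
    have h0 : (0:ℝ) ≤ (t : ℝ)⁻¹ := by positivity
    exact mul_nonneg h0 (Finset.sum_nonneg fun j _ => sq_nonneg _)
  have hdworst : dworst = c2 ^ 2 * lamMax Lsc := by
    rw [hdw]
    rw [iSup_congr fun α0 : {a : Fin r → ℝ // eNorm a ≤ c2} => hmin α0.1]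
    rw [Stmt14.lamMax_eq]
    exact Stmt14.sup_ball hr Lsc c2 hc2 hLnn
  have hdavg : davg = (Lsc * Cmat).trace := by
    rw [hda]
    rw [Finset.sum_congr rfl (fun j _ => hmin (αs j))]
    rw [hC, Matrix.mul_smul, Matrix.trace_smul, Matrix.mul_sum, Matrix.trace_sum]
    simp only [smul_eq_mul]
    congr 1
    exact Finset.sum_congr rfl fun j _ => (Stmt14.trace_mul_vecMulVec Lsc (αs j)).symm
  have htr : lamMax Lsc * lamMin Cmat ≤ (Lsc * Cmat).trace :=
    Stmt14.trace_ineq hr Lsc Cmat hLpsd hCpsd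
  refine ⟨hdworst, hdavg, htr, fun hν => ?_⟩
  have hc2ν : 0 < c2 ^ 2 / lamMin Cmat := div_pos (pow_pos hc2 2) hν
  rw [hdworst, hdavg]
  calc c2 ^ 2 * lamMax Lsc
      = (c2 ^ 2 / lamMin Cmat) * (lamMax Lsc * lamMin Cmat) := by
        field_simp
    _ ≤ (c2 ^ 2 / lamMin Cmat) * (Lsc * Cmat).trace :=
        mul_le_mul_of_nonneg_left htr hc2ν.le

end
end

section
/- Let H = { x ↦ B^T x : B ∈ ℝ^{d×r}, B^T B = I_r } be the class of linear feature maps with orthonormal columns. For any dataset X of N points x_1,…,x_N in ℝ^d with empirical covariance Σ̂_X = (1/N)∑_{i=1}^N x_i x_i^T, the empirical Gaussian complexity of H satisfies Ĝ_X(H) ≤ (r/√N)·√( tr(Σ̂_X) ). -/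
/-! Statement 17: the empirical Gaussian complexity of the class
`H = {x ↦ Bᵀx : BᵀB = I_r}` of linear feature maps with orthonormal columns,
on a dataset of `N` points, is at most `(r/√N)·√(tr Σ̂_X)` where `Σ̂_X` is the
empirical covariance of the data. -/

open MeasureTheory ProbabilityTheory Matrix

noncomputable section GaussAux

lemma pdf01_eq : gaussianPDFReal 0 1 = fun y =>
    (Real.sqrt (2 * Real.pi))⁻¹ * Real.exp (-(2:ℝ)⁻¹ * y ^ 2) := by
  ext y
  simp only [gaussianPDFReal, NNReal.coe_one, mul_one, sub_zero]
  ring_nf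

lemma integral_gauss01 (f : ℝ → ℝ) :
    ∫ y, f y ∂(gaussianReal 0 1) = ∫ y, gaussianPDFReal 0 1 y * f y := by
  rw [gaussianReal_of_var_ne_zero 0 one_ne_zero, gaussianPDF_def]
  have h1 : (fun y => ENNReal.ofReal (gaussianPDFReal 0 1 y))
      = fun y => ((gaussianPDFReal 0 1 y).toNNReal : ENNReal) := rfl
  rw [h1, integral_withDensity_eq_integral_smul
    ((measurable_gaussianPDFReal 0 1).real_toNNReal) f]
  congr 1; ext y
  simp [NNReal.smul_def, Real.coe_toNNReal _ (gaussianPDFReal_nonneg 0 1 y)]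

lemma integrable_gauss01 (f : ℝ → ℝ)
    (h : Integrable (fun y => gaussianPDFReal 0 1 y * f y)) :
    Integrable f (gaussianReal 0 1) := by
  rw [gaussianReal_of_var_ne_zero 0 one_ne_zero, gaussianPDF_def]
  have h1 : (fun y => ENNReal.ofReal (gaussianPDFReal 0 1 y))
      = fun y => ((gaussianPDFReal 0 1 y).toNNReal : ENNReal) := rfl
  rw [h1, integrable_withDensity_iff_integrable_smul
    ((measurable_gaussianPDFReal 0 1).real_toNNReal)]
  convert h using 2 with y
  · rfl
  simp [NNReal.smul_def, Real.coe_toNNReal _ (gaussianPDFReal_nonneg 0 1 y)]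

lemma integrable_pdf_mul_id :
    Integrable (fun y : ℝ => gaussianPDFReal 0 1 y * y) := by
  rw [pdf01_eq]
  have h := (integrable_mul_exp_neg_mul_sq (show (0:ℝ) < 2⁻¹ by norm_num)).const_mul
    ((Real.sqrt (2 * Real.pi))⁻¹)
  convert h using 2 with y
  ring

lemma integrable_pdf_mul_sq :
    Integrable (fun y : ℝ => gaussianPDFReal 0 1 y * y ^ 2) := by
  rw [pdf01_eq]
  have h := (integrable_rpow_mul_exp_neg_mul_sq (show (0:ℝ) < 2⁻¹ by norm_num)
    (show (-1:ℝ) < 2 by norm_num)).const_mul ((Real.sqrt (2 * Real.pi))⁻¹)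
  convert h using 2 with y
  rw [show (2:ℝ) = ((2:ℕ):ℝ) by norm_num, Real.rpow_natCast]
  ring

lemma hasDerivAt_texp (t : ℝ) :
    HasDerivAt (fun t : ℝ => t * Real.exp (-(2:ℝ)⁻¹ * t ^ 2))
      ((1 - t ^ 2) * Real.exp (-(2:ℝ)⁻¹ * t ^ 2)) t := by
  have h1 : HasDerivAt (fun t : ℝ => -(2:ℝ)⁻¹ * t ^ 2) (-(2:ℝ)⁻¹ * ((2:ℕ) * t ^ 1)) t :=
    (hasDerivAt_pow 2 t).const_mul _
  have h3 := (hasDerivAt_id t).fun_mul h1.exp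
  refine h3.congr_deriv ?_
  simp only [id_eq]
  push_cast
  ring

lemma hasDerivAt_nexp (t : ℝ) :
    HasDerivAt (fun t : ℝ => -Real.exp (-(2:ℝ)⁻¹ * t ^ 2))
      (t * Real.exp (-(2:ℝ)⁻¹ * t ^ 2)) t := by
  have h1 : HasDerivAt (fun t : ℝ => -(2:ℝ)⁻¹ * t ^ 2) (-(2:ℝ)⁻¹ * ((2:ℕ) * t ^ 1)) t :=
    (hasDerivAt_pow 2 t).const_mul _
  have h3 := h1.exp.fun_neg
  refine h3.congr_deriv ?_
  push_cast
  ring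

lemma gauss_mean : ∫ y, y ∂(gaussianReal 0 1) = 0 := by
  rw [integral_gauss01, pdf01_eq]
  have h0 : ∫ y : ℝ, y * Real.exp (-(2:ℝ)⁻¹ * y ^ 2) = 0 :=
    integral_eq_zero_of_hasDerivAt_of_integrable hasDerivAt_nexp
      (integrable_mul_exp_neg_mul_sq (show (0:ℝ) < 2⁻¹ by norm_num))
      (integrable_exp_neg_mul_sq (show (0:ℝ) < 2⁻¹ by norm_num)).neg
  simp_rw [mul_assoc, mul_comm (Real.exp _)]
  rw [integral_const_mul, h0, mul_zero]

lemma gauss_sq : ∫ y, y ^ 2 ∂(gaussianReal 0 1) = 1 := by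
  have hint_e := integrable_exp_neg_mul_sq (show (0:ℝ) < 2⁻¹ by norm_num)
  have hint_sq : Integrable (fun y : ℝ => y ^ 2 * Real.exp (-(2:ℝ)⁻¹ * y ^ 2)) := by
    have h := integrable_rpow_mul_exp_neg_mul_sq (show (0:ℝ) < 2⁻¹ by norm_num)
      (show (-1:ℝ) < 2 by norm_num)
    convert h using 2 with y
    rw [show (2:ℝ) = ((2:ℕ):ℝ) by norm_num, Real.rpow_natCast]
  have h0 : ∫ y : ℝ, (1 - y ^ 2) * Real.exp (-(2:ℝ)⁻¹ * y ^ 2) = 0 :=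
    integral_eq_zero_of_hasDerivAt_of_integrable hasDerivAt_texp
      (by
        have := hint_e.sub hint_sq
        convert this using 2 with y
        simp only [Pi.sub_apply]
        ring)
      (integrable_mul_exp_neg_mul_sq (show (0:ℝ) < 2⁻¹ by norm_num))
  have hsub : ∫ y : ℝ, (1 - y ^ 2) * Real.exp (-(2:ℝ)⁻¹ * y ^ 2)
      = (∫ y : ℝ, Real.exp (-(2:ℝ)⁻¹ * y ^ 2)) - ∫ y : ℝ, y ^ 2 * Real.exp (-(2:ℝ)⁻¹ * y ^ 2) := by
    rw [← integral_sub hint_e hint_sq]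
    congr 1; ext y; ring
  have hkey : ∫ y : ℝ, y ^ 2 * Real.exp (-(2:ℝ)⁻¹ * y ^ 2)
      = ∫ y : ℝ, Real.exp (-(2:ℝ)⁻¹ * y ^ 2) := by
    rw [hsub] at h0; linarith
  have hone : ∫ y, gaussianPDFReal 0 1 y = 1 := integral_gaussianPDFReal_eq_one 0 one_ne_zero
  rw [pdf01_eq] at hone
  rw [integral_gauss01, pdf01_eq]
  simp_rw [mul_assoc, mul_comm (Real.exp _)]
  rw [integral_const_mul, hkey]
  rw [integral_const_mul] at hone
  exact hone

end GaussAux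

section PiAux

variable {ι : Type*} [Fintype ι] [DecidableEq ι]

lemma integrable_gauss_id : Integrable (fun y : ℝ => y) (gaussianReal 0 1) :=
  integrable_gauss01 _ integrable_pdf_mul_id

lemma integrable_gauss_sq : Integrable (fun y : ℝ => y ^ 2) (gaussianReal 0 1) :=
  integrable_gauss01 _ integrable_pdf_mul_sq

lemma pi_integrable_mul (a b : ι) :
    Integrable (fun g : ι → ℝ => g a * g b)
      (Measure.pi fun _ : ι => gaussianReal 0 1) := by
  letI : MeasureSpace ℝ := ⟨gaussianReal 0 1⟩
  haveI : SigmaFinite (volume : Measure ℝ) := by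
    show SigmaFinite (gaussianReal 0 1); infer_instance
  haveI : IsProbabilityMeasure (volume : Measure ℝ) := by
    show IsProbabilityMeasure (gaussianReal 0 1); infer_instance
  by_cases hab : a = b
  · subst hab
    have h : Integrable (fun g : ι → ℝ => ∏ i, (if i = a then (fun y : ℝ => y ^ 2) else fun _ => 1) (g i)) :=
      Integrable.fintype_prod (𝕜 := ℝ) (fun i => by
        by_cases hi : i = a
        · simp only [hi, if_pos rfl]; exact integrable_gauss_sq
        · simp only [if_neg hi]; exact integrable_const 1)
    have heq : ∀ g : ι → ℝ, (∏ i, (if i = a then (fun y : ℝ => y ^ 2) else fun _ => 1) (g i)) = g a * g a := by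
      intro g
      rw [Finset.prod_eq_single a (fun c _ hc => by simp [hc]) (fun h => absurd (Finset.mem_univ a) h)]
      simp [sq]
    exact h.congr (ae_of_all _ fun g => heq g)
  · have h : Integrable (fun g : ι → ℝ => ∏ i, (if i = a ∨ i = b then (fun y : ℝ => y) else fun _ => 1) (g i)) :=
      Integrable.fintype_prod (𝕜 := ℝ) (fun i => by
        by_cases hi : i = a ∨ i = b
        · simp only [if_pos hi]; exact integrable_gauss_id
        · simp only [if_neg hi]; exact integrable_const 1)
    have heq : ∀ g : ι → ℝ, (∏ i, (if i = a ∨ i = b then (fun y : ℝ => y) else fun _ => 1) (g i)) = g a * g b := by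
      intro g
      rw [← Finset.prod_subset (Finset.subset_univ ({a, b} : Finset ι))
        (fun c _ hc => by
          simp only [Finset.mem_insert, Finset.mem_singleton] at hc
          push_neg at hc
          simp [hc.1, hc.2])]
      rw [Finset.prod_pair hab]
      simp [hab]
    exact h.congr (ae_of_all _ fun g => heq g)

lemma pi_integral_mul (a b : ι) :
    (∫ g : ι → ℝ, g a * g b ∂(Measure.pi fun _ : ι => gaussianReal 0 1))
      = if a = b then 1 else 0 := by
  letI : MeasureSpace ℝ := ⟨gaussianReal 0 1⟩
  haveI : SigmaFinite (volume : Measure ℝ) := by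
    show SigmaFinite (gaussianReal 0 1); infer_instance
  haveI : IsProbabilityMeasure (volume : Measure ℝ) := by
    show IsProbabilityMeasure (gaussianReal 0 1); infer_instance
  by_cases hab : a = b
  · subst hab
    simp only [if_pos rfl]
    have heq : ∀ g : ι → ℝ, g a * g a = ∏ i, (if i = a then (fun y : ℝ => y ^ 2) else fun _ => 1) (g i) := by
      intro g
      rw [Finset.prod_eq_single a (fun c _ hc => by simp [hc]) (fun h => absurd (Finset.mem_univ a) h)]
      simp [sq]
    calc (∫ g : ι → ℝ, g a * g a ∂(Measure.pi fun _ : ι => gaussianReal 0 1))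
        = ∫ g : ι → ℝ, ∏ i, (if i = a then (fun y : ℝ => y ^ 2) else fun _ => 1) (g i) := by
          congr 1; ext g; exact heq g
      _ = ∏ i, ∫ y : ℝ, (if i = a then (fun y : ℝ => y ^ 2) else fun _ => 1) y := by
          exact MeasureTheory.integral_fintype_prod_eq_prod _
      _ = 1 := by
          rw [Finset.prod_eq_single a
            (fun c _ hc => by simp only [if_neg hc]; simpa using integral_const (1:ℝ))
            (fun h => absurd (Finset.mem_univ a) h)]
          simp only [if_pos rfl]
          exact gauss_sq
  · simp only [if_neg hab]
    have heq : ∀ g : ι → ℝ, g a * g b = ∏ i, (if i = a ∨ i = b then (fun y : ℝ => y) else fun _ => 1) (g i) := by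
      intro g
      rw [← Finset.prod_subset (Finset.subset_univ ({a, b} : Finset ι))
        (fun c _ hc => by
          simp only [Finset.mem_insert, Finset.mem_singleton] at hc
          push_neg at hc
          simp [hc.1, hc.2])]
      rw [Finset.prod_pair hab]
      simp [hab]
    calc (∫ g : ι → ℝ, g a * g b ∂(Measure.pi fun _ : ι => gaussianReal 0 1))
        = ∫ g : ι → ℝ, ∏ i, (if i = a ∨ i = b then (fun y : ℝ => y) else fun _ => 1) (g i) := by
          congr 1; ext g; exact heq g
      _ = ∏ i, ∫ y : ℝ, (if i = a ∨ i = b then (fun y : ℝ => y) else fun _ => 1) y := by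
          exact MeasureTheory.integral_fintype_prod_eq_prod _
      _ = 0 := by
          refine Finset.prod_eq_zero (Finset.mem_univ a) ?_
          simp only [if_pos (Or.inl rfl)]
          exact gauss_mean

end PiAux

section LinAux

variable {ι : Type*} [Fintype ι] [DecidableEq ι]

lemma expand_sq {κ : Type*} [Fintype κ] (e : κ ↪ ι) (w : κ → ℝ) (g : ι → ℝ) :
    (∑ i, w i * g (e i)) ^ 2 = ∑ i, ∑ j, (w i * w j) * (g (e i) * g (e j)) := by
  rw [sq, Finset.sum_mul_sum]
  refine Finset.sum_congr rfl fun i _ => Finset.sum_congr rfl fun j _ => by ring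

lemma pi_integrable_lin_sq {κ : Type*} [Fintype κ] (e : κ ↪ ι) (w : κ → ℝ) :
    Integrable (fun g : ι → ℝ => (∑ i, w i * g (e i)) ^ 2)
      (Measure.pi fun _ : ι => gaussianReal 0 1) := by
  have h : (fun g : ι → ℝ => (∑ i, w i * g (e i)) ^ 2)
      = fun g => ∑ i, ∑ j, (w i * w j) * (g (e i) * g (e j)) := funext (expand_sq e w)
  rw [h]
  exact integrable_finset_sum _ fun i _ => integrable_finset_sum _ fun j _ =>
    (pi_integrable_mul (e i) (e j)).const_mul _

lemma pi_integral_lin_sq {κ : Type*} [Fintype κ] [DecidableEq κ] (e : κ ↪ ι) (w : κ → ℝ) :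
    (∫ g : ι → ℝ, (∑ i, w i * g (e i)) ^ 2 ∂(Measure.pi fun _ : ι => gaussianReal 0 1))
      = ∑ i, w i ^ 2 := by
  simp_rw [expand_sq e w]
  rw [integral_finset_sum _ fun i _ => integrable_finset_sum _ fun j _ =>
    (pi_integrable_mul (e i) (e j)).const_mul _]
  have hterm : ∀ i : κ, (∫ g : ι → ℝ, ∑ j, (w i * w j) * (g (e i) * g (e j))
        ∂(Measure.pi fun _ : ι => gaussianReal 0 1))
      = ∑ j, (w i * w j) * (∫ g : ι → ℝ, g (e i) * g (e j)
        ∂(Measure.pi fun _ : ι => gaussianReal 0 1)) := by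
    intro i
    rw [integral_finset_sum _ fun j _ => (pi_integrable_mul (e i) (e j)).const_mul _]
    exact Finset.sum_congr rfl fun j _ => MeasureTheory.integral_const_mul _ _
  simp_rw [hterm, pi_integral_mul, EmbeddingLike.apply_eq_iff_eq]
  refine Finset.sum_congr rfl fun i _ => ?_
  have : ∀ j : κ, (w i * w j) * (if i = j then (1:ℝ) else 0)
      = if j = i then w i ^ 2 else 0 := by
    intro j
    by_cases h : j = i
    · subst h; simp [sq]
    · simp only [if_neg (fun hh : i = j => h hh.symm), if_neg h, mul_zero]
  simp_rw [this]
  simp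

lemma int_le_sqrt_int_sq {α : Type*} [MeasurableSpace α] (μ : Measure α)
    [IsProbabilityMeasure μ] (Z : α → ℝ) (hZm : AEStronglyMeasurable Z μ)
    (hZ : ∀ a, 0 ≤ Z a) (hZ2 : Integrable (fun a => Z a ^ 2) μ) :
    ∫ a, Z a ∂μ ≤ Real.sqrt (∫ a, Z a ^ 2 ∂μ) := by
  have hmem : MemLp Z 2 μ := (memLp_two_iff_integrable_sq hZm).2 hZ2
  have hvar := variance_nonneg Z μ
  rw [variance_eq_sub hmem] at hvar
  have hsq : (∫ a, Z a ∂μ) ^ 2 ≤ ∫ a, Z a ^ 2 ∂μ := by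
    have : μ[Z ^ 2] = ∫ a, Z a ^ 2 ∂μ := by congr
    rw [this] at hvar
    linarith
  calc ∫ a, Z a ∂μ = Real.sqrt ((∫ a, Z a ∂μ) ^ 2) :=
        (Real.sqrt_sq (integral_nonneg hZ)).symm
    _ ≤ Real.sqrt (∫ a, Z a ^ 2 ∂μ) := Real.sqrt_le_sqrt hsq

end LinAux

lemma sqrt_le_one_add (t : ℝ) (ht : 0 ≤ t) : Real.sqrt t ≤ 1 + t := by
  rcases le_total t 1 with h | h
  · calc Real.sqrt t ≤ Real.sqrt 1 := Real.sqrt_le_sqrt h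
      _ = 1 := Real.sqrt_one
      _ ≤ 1 + t := by linarith
  · calc Real.sqrt t ≤ Real.sqrt (t * t) := Real.sqrt_le_sqrt (by nlinarith)
      _ = t := Real.sqrt_mul_self ht
      _ ≤ 1 + t := by linarith

set_option maxHeartbeats 1000000 in
theorem gaussian_complexity_orthonormal_linear_features
    {d r N : ℕ} (hN : 0 < N) (x : Fin N → (Fin d → ℝ)) :
    (∫ g : Fin r × Fin N → ℝ,
        (⨆ B : {B : Matrix (Fin d) (Fin r) ℝ // Bᵀ * B = 1},
          (∑ k : Fin r, ∑ i : Fin N, g (k, i) * ((B.1)ᵀ.mulVec (x i)) k) / N)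
        ∂(Measure.pi fun _ : Fin r × Fin N => gaussianReal 0 1))
      ≤ ((r : ℝ) / Real.sqrt N) *
          Real.sqrt (((N : ℝ)⁻¹ • ∑ i : Fin N, Matrix.vecMulVec (x i) (x i)).trace) := by
  have hN' : (0:ℝ) < N := by exact_mod_cast hN
  set μπ : Measure (Fin r × Fin N → ℝ) := Measure.pi fun _ : Fin r × Fin N => gaussianReal 0 1
    with hμπ
  set T : ℝ := ∑ i : Fin N, ∑ j : Fin d, x i j ^ 2 with hT
  -- embedding
  have einj : ∀ k : Fin r, Function.Injective (fun i : Fin N => ((k, i) : Fin r × Fin N)) :=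
    fun k i i' hh => (Prod.ext_iff.1 hh).2
  set e : Fin r → (Fin N ↪ Fin r × Fin N) := fun k => ⟨fun i => (k, i), einj k⟩ with he
  -- the norm of the k-th Gaussian vector
  set nv : Fin r → (Fin r × Fin N → ℝ) → ℝ :=
    fun k g => Real.sqrt (∑ j : Fin d, (∑ i : Fin N, x i j * g (e k i)) ^ 2) with hnv
  have nv_nonneg : ∀ k g, 0 ≤ nv k g := fun k g => Real.sqrt_nonneg _
  -- RHS simplification
  have hRHS : ((r : ℝ) / Real.sqrt N) *
      Real.sqrt (((N : ℝ)⁻¹ • ∑ i : Fin N, Matrix.vecMulVec (x i) (x i)).trace)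
      = (r : ℝ) * Real.sqrt T / N := by
    have htr : ((N : ℝ)⁻¹ • ∑ i : Fin N, Matrix.vecMulVec (x i) (x i)).trace
        = (N : ℝ)⁻¹ * T := by
      rw [Matrix.trace_smul, Matrix.trace_sum]
      simp only [smul_eq_mul]
      congr 1
      refine Finset.sum_congr rfl fun i _ => ?_
      simp [Matrix.trace, Matrix.diag, Matrix.vecMulVec_apply, sq]
    rw [htr, Real.sqrt_mul (by positivity) T, Real.sqrt_inv]
    rw [div_mul_eq_mul_div, mul_comm ((Real.sqrt N)⁻¹)]
    rw [eq_div_iff (ne_of_gt hN')]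
    field_simp
    rw [Real.sq_sqrt hN'.le]
  rw [hRHS]
  -- pointwise Cauchy-Schwarz bound
  have claim1 : ∀ (g : Fin r × Fin N → ℝ) (B : Matrix (Fin d) (Fin r) ℝ), Bᵀ * B = 1 →
      (∑ k : Fin r, ∑ i : Fin N, g (k, i) * (Bᵀ.mulVec (x i)) k) ≤ ∑ k : Fin r, nv k g := by
    intro g B hB
    refine Finset.sum_le_sum fun k _ => ?_
    have hswap : ∑ i : Fin N, g (k, i) * (Bᵀ.mulVec (x i)) k
        = ∑ j : Fin d, B j k * ∑ i : Fin N, x i j * g (e k i) := by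
      simp only [Matrix.mulVec, dotProduct, Matrix.transpose_apply, Finset.mul_sum]
      rw [Finset.sum_comm]
      exact Finset.sum_congr rfl fun j _ => Finset.sum_congr rfl fun i _ => by
        simp only [he, Function.Embedding.coeFn_mk]; ring
    rw [hswap]
    have hcs := Real.sum_mul_le_sqrt_mul_sqrt Finset.univ (fun j => B j k)
      (fun j => ∑ i : Fin N, x i j * g (e k i))
    have hcol : ∑ j : Fin d, B j k ^ 2 = 1 := by
      have h1 : (Bᵀ * B) k k = ∑ j : Fin d, B j k ^ 2 := by
        simp [Matrix.mul_apply, Matrix.transpose_apply, sq]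
      rw [hB] at h1
      rw [← h1, Matrix.one_apply_eq]
    rw [hcol, Real.sqrt_one, one_mul] at hcs
    exact hcs
  -- upper/lower bounds for the sup
  by_cases hne : Nonempty {B : Matrix (Fin d) (Fin r) ℝ // Bᵀ * B = 1}
  swap
  · haveI := not_nonempty_iff.1 hne
    simp only [Real.iSup_of_isEmpty]
    rw [integral_zero]
    positivity
  · -- nonempty case
    set f : (Fin r × Fin N → ℝ) → ℝ := fun g =>
      ⨆ B : {B : Matrix (Fin d) (Fin r) ℝ // Bᵀ * B = 1},
        (∑ k : Fin r, ∑ i : Fin N, g (k, i) * ((B.1)ᵀ.mulVec (x i)) k) / N with hf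
    set h : (Fin r × Fin N → ℝ) → ℝ := fun g => (∑ k : Fin r, nv k g) / N with hh
    have hub : ∀ g (B : {B : Matrix (Fin d) (Fin r) ℝ // Bᵀ * B = 1}),
        (∑ k : Fin r, ∑ i : Fin N, g (k, i) * ((B.1)ᵀ.mulVec (x i)) k) / N ≤ h g := by
      intro g B
      have hcl := claim1 g B.1 B.2
      simp only [hh]
      exact (div_le_div_iff_of_pos_right hN').2 hcl
    have hbdd : ∀ g : Fin r × Fin N → ℝ, BddAbove (Set.range fun B : {B : Matrix (Fin d) (Fin r) ℝ // Bᵀ * B = 1} =>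
        (∑ k : Fin r, ∑ i : Fin N, g (k, i) * ((B.1)ᵀ.mulVec (x i)) k) / N) := by
      intro g
      refine ⟨h g, ?_⟩
      rintro _ ⟨B, rfl⟩
      exact hub g B
    have hfh : ∀ g, f g ≤ h g := fun g => ciSup_le (hub g)
    have hlb : ∀ g, -h g ≤ f g := by
      intro g
      obtain ⟨B₀⟩ := hne
      have hB1 : (-B₀.1)ᵀ * (-B₀.1) = 1 := by
        rw [Matrix.transpose_neg, Matrix.neg_mul, Matrix.mul_neg, neg_neg, B₀.2]
      have hSneg : (∑ k : Fin r, ∑ i : Fin N, g (k, i) * (((-B₀.1))ᵀ.mulVec (x i)) k)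
          = -(∑ k : Fin r, ∑ i : Fin N, g (k, i) * ((B₀.1)ᵀ.mulVec (x i)) k) := by
        simp [Matrix.transpose_neg, Matrix.neg_mulVec, Finset.sum_neg_distrib]
      have h1 : -h g ≤ (∑ k : Fin r, ∑ i : Fin N, g (k, i) * (((-B₀.1))ᵀ.mulVec (x i)) k) / N := by
        rw [hSneg]
        simp only [hh]
        rw [← neg_div]
        exact (div_le_div_iff_of_pos_right hN').2 (neg_le_neg (claim1 g B₀.1 B₀.2))
      exact h1.trans (le_ciSup (hbdd g) (⟨-B₀.1, hB1⟩ :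
        {B : Matrix (Fin d) (Fin r) ℝ // Bᵀ * B = 1}))
    -- integrability
    have hv2int : ∀ k, Integrable
        (fun g : Fin r × Fin N → ℝ => ∑ j : Fin d, (∑ i : Fin N, x i j * g (e k i)) ^ 2) μπ :=
      fun k => integrable_finset_sum _ fun j _ => pi_integrable_lin_sq (e k) (fun i => x i j)
    have hnvmeas : ∀ k, Measurable (nv k) := by
      intro k
      simp only [hnv]
      refine Measurable.sqrt ?_
      refine Finset.measurable_sum (f := fun (j : Fin d) (g : Fin r × Fin N → ℝ) =>
        (∑ i : Fin N, x i j * g (e k i)) ^ 2) Finset.univ (fun j _ => ?_)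
      refine Measurable.pow_const ?_ 2
      exact Finset.measurable_sum (f := fun (i : Fin N) (g : Fin r × Fin N → ℝ) =>
        x i j * g (e k i)) Finset.univ
        (fun i _ => (measurable_pi_apply (e k i) : Measurable fun g : Fin r × Fin N → ℝ => g (e k i)).const_mul (x i j))
    have hnvsq : ∀ k g, nv k g ^ 2 = ∑ j : Fin d, (∑ i : Fin N, x i j * g (e k i)) ^ 2 :=
      fun k g => Real.sq_sqrt (by positivity)
    have hnvint : ∀ k, Integrable (nv k) μπ := by
      intro k
      refine Integrable.mono' ((integrable_const (1:ℝ)).add (hv2int k))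
        (hnvmeas k).aestronglyMeasurable (ae_of_all _ fun g => ?_)
      rw [Real.norm_eq_abs, abs_of_nonneg (nv_nonneg k g)]
      exact sqrt_le_one_add _ (by positivity)
    have hint : Integrable h μπ := (integrable_finset_sum _ fun k _ => hnvint k).div_const _
    have hnvval : ∀ k, (∫ g, nv k g ∂μπ) ≤ Real.sqrt T := by
      intro k
      have h1 := int_le_sqrt_int_sq μπ (nv k) (hnvmeas k).aestronglyMeasurable (nv_nonneg k)
        ((hv2int k).congr (ae_of_all _ fun g => (hnvsq k g).symm))
      have h2 : (∫ g, nv k g ^ 2 ∂μπ) = T := by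
        calc (∫ g, nv k g ^ 2 ∂μπ)
            = ∫ g, ∑ j : Fin d, (∑ i : Fin N, x i j * g (e k i)) ^ 2 ∂μπ := by
              congr 1; ext g; exact hnvsq k g
          _ = ∑ j : Fin d, ∑ i : Fin N, (x i j) ^ 2 := by
              rw [integral_finset_sum _ fun j _ => pi_integrable_lin_sq (e k) (fun i => x i j)]
              exact Finset.sum_congr rfl fun j _ => pi_integral_lin_sq (e k) (fun i => x i j)
          _ = T := Finset.sum_comm
      rw [h2] at h1
      exact h1
    have hIh : (∫ g, h g ∂μπ) ≤ (r : ℝ) * Real.sqrt T / N := by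
      have heq : (∫ g, h g ∂μπ) = (∑ k : Fin r, ∫ g, nv k g ∂μπ) / N := by
        simp only [hh]
        rw [integral_div, integral_finset_sum _ fun k _ => hnvint k]
      rw [heq]
      gcongr
      calc ∑ k : Fin r, ∫ g, nv k g ∂μπ ≤ ∑ _k : Fin r, Real.sqrt T :=
            Finset.sum_le_sum fun k _ => hnvval k
        _ = (r : ℝ) * Real.sqrt T := by
            rw [Finset.sum_const, Finset.card_univ, Fintype.card_fin, nsmul_eq_mul]
    by_cases hfint : Integrable f μπ
    · exact (integral_mono hfint hint hfh).trans hIh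
    · rw [integral_undef hfint]
      positivity
end
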